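/- For every ε > 0 there exist constants c > 0, ρ > 0, C > 0 and a natural number M₀ such that for all M ≥ M₀ and all natural numbers H ≤ ρ·M the following holds. Let B = {δ : Matrix (Fin M) (Fin M) (ZMod 2) | δ·δ = 0 ∧ M − 2·rank(δ) = H}. Then the number of δ ∈ B for which there exists a nonzero vector v : Fin M → ZMod 2 with δ·v = 0 and wt(v) < c·M is at most C · 2^((ε − 1/2)·M) · |B|. The same bound holds with δᵀ in place of δ (i.e., for kernels of transposes). -/

import Mathlib

open Matrix

/-- The weight of a vector over `ZMod 2`: its number of nonzero entries. -/
def wt {n : ℕ} (v : Fin n → ZMod 2) : ℕ :=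
  (Finset.univ.filter fun i => v i ≠ 0).card

open Finset

variable {M : ℕ}

lemma zmod2_eq_one {x : ZMod 2} (h : x ≠ 0) : x = 1 := by revert h; revert x; decide

def gv (v : Fin M → ZMod 2) (i : Fin M) : Matrix (Fin M) (Fin M) (ZMod 2) :=
  fun k l => if l = i then v k else if k = l then 1 else 0

lemma gv_mul_gv (v : Fin M → ZMod 2) (i : Fin M) (hvi : v i = 1) :
    gv v i * gv v i = 1 := by
  ext k l
  rw [Matrix.mul_apply, Matrix.one_apply]
  by_cases hl : l = i
  · subst hl
    have hsum : ∀ m, gv v l k m * gv v l m l = gv v l k m * v m := by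
      intro m; simp [gv]
    rw [Finset.sum_congr rfl (fun m _ => hsum m)]
    rw [← Finset.add_sum_erase _ _ (Finset.mem_univ l)]
    have h2 : ∑ m ∈ univ.erase l, gv v l k m * v m
        = ∑ m ∈ univ.erase l, if k = m then v m else 0 := by
      refine Finset.sum_congr rfl (fun m hm => ?_)
      have hmi : m ≠ l := (Finset.mem_erase.mp hm).1
      simp [gv, hmi]
    rw [h2, Finset.sum_ite_eq]
    by_cases hk : k = l
    · subst hk; simp [gv, hvi]
    · simp [gv, hk, hvi, zmod2_eq_one, CharTwo.add_self_eq_zero]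
  · have hsum : ∀ m, gv v i k m * gv v i m l = if m = l then gv v i k m else 0 := by
      intro m
      by_cases hm : m = l <;> simp [gv, hm, hl]
    rw [Finset.sum_congr rfl (fun m _ => hsum m), Finset.sum_ite_eq' univ l _]
    simp [gv, hl]

lemma gv_mulVec_single (v : Fin M → ZMod 2) (i : Fin M) :
    (gv v i).mulVec (Pi.single i 1) = v := by
  ext k
  simp [Matrix.mulVec, dotProduct, gv, Pi.single_apply, Finset.sum_ite_eq]

def gsw (i j : Fin M) : Matrix (Fin M) (Fin M) (ZMod 2) :=
  fun k l => if k = Equiv.swap i j l then 1 else 0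

lemma gsw_mul_gsw (i j : Fin M) : gsw i j * gsw i j = 1 := by
  ext k l
  rw [Matrix.mul_apply, Matrix.one_apply]
  have hsum : ∀ m, gsw i j k m * gsw i j m l
      = if m = Equiv.swap i j l then (if k = Equiv.swap i j m then 1 else 0) else 0 := by
    intro m; by_cases hm : m = Equiv.swap i j l <;> simp [gsw, hm]
  rw [Finset.sum_congr rfl (fun m _ => hsum m), Finset.sum_ite_eq' univ _ _]
  simp [Equiv.swap_apply_self]

lemma gsw_mulVec_single (i j : Fin M) :
    (gsw i j).mulVec (Pi.single i 1) = Pi.single (Equiv.swap i j i) 1 := by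
  ext k
  simp [Matrix.mulVec, dotProduct, gsw, Pi.single_apply, Finset.sum_ite_eq,
    Equiv.eq_symm_apply]

open scoped Classical in
noncomputable def Bset (M H : ℕ) : Finset (Matrix (Fin M) (Fin M) (ZMod 2)) :=
  univ.filter fun δ => δ * δ = 0 ∧ M - 2 * δ.rank = H

open scoped Classical in
noncomputable def tcard (M H : ℕ) (v : Fin M → ZMod 2) : ℕ :=
  ((Bset M H).filter fun δ => δ.mulVec v = 0).card

lemma conj_conj {g : Matrix (Fin M) (Fin M) (ZMod 2)} (hg : g * g = 1)
    (δ : Matrix (Fin M) (Fin M) (ZMod 2)) : g * (g * δ * g) * g = δ := by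
  simp only [mul_assoc, hg, mul_one]
  rw [← mul_assoc, hg, one_mul]

lemma rank_conj {g δ : Matrix (Fin M) (Fin M) (ZMod 2)} (hg : g * g = 1) :
    (g * δ * g).rank = δ.rank := by
  refine le_antisymm ((Matrix.rank_mul_le_left _ _).trans (Matrix.rank_mul_le_right _ _)) ?_
  conv_lhs => rw [← conj_conj hg δ]
  exact (Matrix.rank_mul_le_left _ _).trans (Matrix.rank_mul_le_right _ _)

lemma mem_Bset_conj {g δ : Matrix (Fin M) (Fin M) (ZMod 2)} {H : ℕ} (hg : g * g = 1)
    (hδ : δ ∈ Bset M H) : g * δ * g ∈ Bset M H := by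
  simp only [Bset, Finset.mem_filter, Finset.mem_univ, true_and] at *
  refine ⟨?_, by rw [rank_conj hg]; exact hδ.2⟩
  have h1 : g * δ * g * (g * δ * g) = g * (δ * ((g * g) * (δ * g))) := by
    simp only [mul_assoc]
  rw [h1, hg, one_mul, ← mul_assoc δ δ g, hδ.1]
  simp

lemma tcard_conj {g : Matrix (Fin M) (Fin M) (ZMod 2)} (hg : g * g = 1)
    (H : ℕ) (v : Fin M → ZMod 2) : tcard M H (g.mulVec v) = tcard M H v := by
  classical
  unfold tcard
  refine Finset.card_bij' (fun δ _ => g * δ * g) (fun δ _ => g * δ * g) ?_ ?_ ?_ ?_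
  · intro δ hδ
    simp only [Finset.mem_filter] at hδ ⊢
    refine ⟨mem_Bset_conj hg hδ.1, ?_⟩
    rw [← Matrix.mulVec_mulVec, ← Matrix.mulVec_mulVec, hδ.2]
    simp
  · intro δ hδ
    simp only [Finset.mem_filter] at hδ ⊢
    refine ⟨mem_Bset_conj hg hδ.1, ?_⟩
    have hv : v = g.mulVec (g.mulVec v) := by
      rw [Matrix.mulVec_mulVec, hg]; simp
    rw [← Matrix.mulVec_mulVec, ← Matrix.mulVec_mulVec, ← hv, hδ.2]
    simp
  · intro δ _; exact conj_conj hg δ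
  · intro δ _; exact conj_conj hg δ

lemma tcard_const {H : ℕ} {v v' : Fin M → ZMod 2} (hv : v ≠ 0) (hv' : v' ≠ 0) :
    tcard M H v = tcard M H v' := by
  obtain ⟨i, hi⟩ : ∃ i, v i ≠ 0 := by
    by_contra h; push_neg at h; exact hv (funext h)
  obtain ⟨j, hj⟩ : ∃ j, v' j ≠ 0 := by
    by_contra h; push_neg at h; exact hv' (funext h)
  have h1 : tcard M H v = tcard M H (Pi.single i 1) := by
    rw [← gv_mulVec_single v i, tcard_conj (gv_mul_gv v i (zmod2_eq_one hi))]
  have h3 : tcard M H v' = tcard M H (Pi.single j 1) := by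
    rw [← gv_mulVec_single v' j, tcard_conj (gv_mul_gv v' j (zmod2_eq_one hj))]
  have h2 : tcard M H (Pi.single j 1) = tcard M H (Pi.single i 1) := by
    have := tcard_conj (gsw_mul_gsw i j) H (Pi.single i 1)
    rw [gsw_mulVec_single, Equiv.swap_apply_left] at this
    rw [this]
  rw [h1, h3, h2]

lemma range_le_ker {δ : Matrix (Fin M) (Fin M) (ZMod 2)} (hδ : δ * δ = 0) :
    LinearMap.range δ.mulVecLin ≤ LinearMap.ker δ.mulVecLin := by
  rintro x ⟨y, rfl⟩
  simp only [LinearMap.mem_ker]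
  have : δ.mulVecLin (δ.mulVecLin y) = (δ * δ).mulVecLin y := by
    rw [Matrix.mulVecLin_mul]; rfl
  rw [this, hδ]; simp

lemma finrank_pi_M : Module.finrank (ZMod 2) (Fin M → ZMod 2) = M := by
  simp [Module.finrank_pi]

lemma rank_nullity (δ : Matrix (Fin M) (Fin M) (ZMod 2)) :
    δ.rank + Module.finrank (ZMod 2) (LinearMap.ker δ.mulVecLin) = M := by
  rw [Matrix.rank]
  rw [LinearMap.finrank_range_add_finrank_ker δ.mulVecLin, finrank_pi_M]

lemma two_rank_le {δ : Matrix (Fin M) (Fin M) (ZMod 2)} (hδ : δ * δ = 0) :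
    2 * δ.rank ≤ M := by
  have h1 : δ.rank ≤ Module.finrank (ZMod 2) (LinearMap.ker δ.mulVecLin) :=
    Submodule.finrank_mono (range_le_ker hδ)
  have := rank_nullity δ
  omega

open scoped Classical in
lemma ker_card (δ : Matrix (Fin M) (Fin M) (ZMod 2)) :
    (univ.filter fun v : Fin M → ZMod 2 => δ.mulVec v = 0).card = 2 ^ (M - δ.rank) := by
  rw [← Fintype.card_subtype]
  have e : {v : Fin M → ZMod 2 // δ.mulVec v = 0} ≃ LinearMap.ker δ.mulVecLin :=
    Equiv.subtypeEquivRight (by intro v; simp [LinearMap.mem_ker])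
  rw [Fintype.card_congr e]
  have := Module.card_eq_pow_finrank (K := ZMod 2) (V := LinearMap.ker δ.mulVecLin)
  rw [this, ZMod.card]
  congr 1
  have := rank_nullity δ
  omega

lemma wt_le (v : Fin M → ZMod 2) : wt v ≤ M := by
  classical
  calc wt v ≤ (univ : Finset (Fin M)).card := Finset.card_filter_le _ _
  _ = M := by simp

lemma wt_eq_sum (v : Fin M → ZMod 2) :
    wt v = ∑ i, if v i ≠ 0 then 1 else 0 := by
  classical
  rw [wt, Finset.card_filter]

lemma wt_cons (a : ZMod 2) (v : Fin M → ZMod 2) :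
    wt (Fin.cons a v) = (if a ≠ 0 then 1 else 0) + wt v := by
  classical
  rw [wt_eq_sum, wt_eq_sum, Fin.sum_univ_succ]
  simp

lemma sum_pow_wt (x y : ℝ) :
    ∑ v : Fin M → ZMod 2, x ^ (wt v) * y ^ (M - wt v) = (x + y) ^ M := by
  induction M with
  | zero => simp [wt]
  | succ n ih =>
    have key : ∀ v : Fin n → ZMod 2,
        x ^ (wt (Fin.cons (0:ZMod 2) v)) * y ^ (n + 1 - wt (Fin.cons (0:ZMod 2) v))
        + x ^ (wt (Fin.cons (1:ZMod 2) v)) * y ^ (n + 1 - wt (Fin.cons (1:ZMod 2) v))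
        = (x + y) * (x ^ (wt v) * y ^ (n - wt v)) := by
      intro v
      have h0 : wt (Fin.cons (0 : ZMod 2) v) = wt v := by rw [wt_cons]; simp
      have h1 : wt (Fin.cons (1 : ZMod 2) v) = 1 + wt v := by rw [wt_cons]; norm_num
      rw [h0, h1]
      have hw := wt_le v
      have e1 : n + 1 - wt v = (n - wt v) + 1 := by omega
      have e2 : n + 1 - (1 + wt v) = n - wt v := by omega
      rw [e1, e2, pow_succ, pow_add]
      ring
    calc ∑ v : Fin (n+1) → ZMod 2, x ^ wt v * y ^ (n+1 - wt v)
        = ∑ p : ZMod 2 × (Fin n → ZMod 2),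
            x ^ wt (Fin.cons p.1 p.2) * y ^ (n+1 - wt (Fin.cons p.1 p.2)) := by
          rw [← Equiv.sum_comp (Fin.consEquiv (fun _ : Fin (n+1) => ZMod 2))
                (fun v : Fin (n+1) → ZMod 2 => x ^ wt v * y ^ (n+1 - wt v))]
          exact Finset.sum_congr rfl (fun p _ => by simp [Fin.consEquiv])
      _ = ∑ v : Fin n → ZMod 2, ∑ a : ZMod 2,
            x ^ wt (Fin.cons a v) * y ^ (n+1 - wt (Fin.cons a v)) := by
          rw [Fintype.sum_prod_type, Finset.sum_comm]
      _ = ∑ v : Fin n → ZMod 2, (x + y) * (x ^ wt v * y ^ (n - wt v)) := by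
          refine Finset.sum_congr rfl (fun v _ => ?_)
          rw [show (univ : Finset (ZMod 2)) = {0,1} from by decide,
              Finset.sum_pair (by decide : (0:ZMod 2) ≠ 1)]
          exact key v
      _ = (x+y)^(n+1) := by rw [← Finset.mul_sum, ih, pow_succ]; ring

open scoped Classical in
lemma Ncard_le {c : ℝ} (hc0 : 0 < c) (hc1 : c ≤ 1/2) (M : ℕ) :
    ((univ.filter fun v : Fin M → ZMod 2 => v ≠ 0 ∧ (wt v : ℝ) < c * M).card : ℝ)
      ≤ Real.exp (4 * Real.sqrt c * M) := by
  have h1c : 0 < 1 - c := by linarith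
  set b : ℝ := c / (1 - c) with hb
  have hb0 : 0 < b := div_pos hc0 h1c
  have hb1 : b ≤ 1 := by rw [div_le_one h1c]; linarith
  set q : ℝ := (1 - c) ^ M * b ^ (c * (M : ℝ)) with hq
  have hqpos : 0 < q := mul_pos (pow_pos h1c M) (Real.rpow_pos_of_pos hb0 _)
  -- step 1 : N * q ≤ 1
  have hNq : ((univ.filter fun v : Fin M → ZMod 2 =>
      v ≠ 0 ∧ (wt v : ℝ) < c * M).card : ℝ) * q ≤ 1 := by
    have hterm : ∀ v : Fin M → ZMod 2,
        c ^ (wt v) * (1 - c) ^ (M - wt v) = (1 - c) ^ M * b ^ (wt v) := by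
      intro v
      rw [pow_sub₀ _ (ne_of_gt h1c) (wt_le v), hb, div_pow]
      field_simp
    have hsum : ∑ v : Fin M → ZMod 2, c ^ (wt v) * (1 - c) ^ (M - wt v) = 1 := by
      rw [sum_pow_wt]; norm_num
    calc ((univ.filter fun v : Fin M → ZMod 2 =>
          v ≠ 0 ∧ (wt v : ℝ) < c * M).card : ℝ) * q
        = ∑ _v ∈ (univ.filter fun v : Fin M → ZMod 2 =>
            v ≠ 0 ∧ (wt v : ℝ) < c * M), q := by rw [Finset.sum_const, nsmul_eq_mul]
      _ ≤ ∑ v ∈ (univ.filter fun v : Fin M → ZMod 2 =>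
            v ≠ 0 ∧ (wt v : ℝ) < c * M), c ^ (wt v) * (1 - c) ^ (M - wt v) := by
          refine Finset.sum_le_sum (fun v hv => ?_)
          rw [hterm v, hq]
          refine mul_le_mul_of_nonneg_left ?_ (le_of_lt (pow_pos h1c M))
          rw [← Real.rpow_natCast b (wt v)]
          refine Real.rpow_le_rpow_of_exponent_ge hb0 hb1 ?_
          exact le_of_lt (Finset.mem_filter.mp hv).2.2
      _ ≤ ∑ v : Fin M → ZMod 2, c ^ (wt v) * (1 - c) ^ (M - wt v) := by
          refine Finset.sum_le_sum_of_subset_of_nonneg (Finset.filter_subset _ _) ?_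
          intro v _ _
          positivity
      _ = 1 := hsum
  -- step 2 : q ≥ exp (-(4 √c M))
  have hqexp : Real.exp (-(4 * Real.sqrt c * M)) ≤ q := by
    have hsq : 0 < Real.sqrt c := Real.sqrt_pos.mpr hc0
    have hq_eq : q = Real.exp ((M : ℝ) * Real.log (1 - c) + Real.log b * (c * M)) := by
      rw [hq, Real.exp_add, Real.rpow_def_of_pos hb0]
      congr 1
      rw [mul_comm (M : ℝ) _, Real.exp_mul, Real.exp_log h1c]
      norm_num
    rw [hq_eq]
    apply Real.exp_le_exp.mpr
    have hlog1 : -Real.log (1 - c) ≤ 2 * c := by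
      have := Real.log_le_sub_one_of_pos (x := (1 - c)⁻¹) (by positivity)
      rw [Real.log_inv] at this
      have h2 : (1 - c)⁻¹ - 1 = c / (1 - c) := by field_simp; ring
      have h3 : c / (1 - c) ≤ 2 * c := by
        rw [div_le_iff₀ h1c]; nlinarith
      linarith
    have hlog2 : -Real.log b ≤ Real.log c⁻¹ := by
      rw [hb, ← Real.log_inv]
      apply Real.log_le_log (by positivity)
      rw [inv_div, div_le_iff₀ hc0, inv_mul_cancel₀ (ne_of_gt hc0)]
      linarith
    have hlog3 : c * Real.log c⁻¹ ≤ 2 * Real.sqrt c := by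
      have h4 : Real.log c⁻¹ = 2 * Real.log (Real.sqrt c)⁻¹ := by
        rw [Real.log_inv, Real.log_inv, Real.log_sqrt hc0.le]; ring
      have h5 : Real.log (Real.sqrt c)⁻¹ ≤ (Real.sqrt c)⁻¹ := by
        have := Real.log_le_sub_one_of_pos (x := (Real.sqrt c)⁻¹) (by positivity)
        linarith
      have h6 : c * (Real.sqrt c)⁻¹ = Real.sqrt c := by
        rw [← Real.mul_self_sqrt hc0.le]
        field_simp
        rw [Real.sqrt_sq (Real.sqrt_nonneg c)]
      calc c * Real.log c⁻¹ = 2 * (c * Real.log (Real.sqrt c)⁻¹) := by rw [h4]; ring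
        _ ≤ 2 * (c * (Real.sqrt c)⁻¹) := by
            refine mul_le_mul_of_nonneg_left (mul_le_mul_of_nonneg_left h5 hc0.le) (by norm_num)
        _ = 2 * Real.sqrt c := by rw [h6]
    have hcs : c ≤ Real.sqrt c := by
      nlinarith [Real.sq_sqrt hc0.le, Real.sqrt_nonneg c, hc1]
    have hM0 : (0:ℝ) ≤ M := Nat.cast_nonneg M
    nlinarith [mul_le_mul_of_nonneg_left hlog1 hM0,
      mul_le_mul_of_nonneg_left hlog3 hM0,
      mul_le_mul_of_nonneg_left hlog2 (mul_nonneg hc0.le hM0),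
      mul_le_mul_of_nonneg_left hcs (by positivity : (0:ℝ) ≤ 2 * (M:ℝ))]
  -- combine
  have hN := (le_div_iff₀ hqpos).mpr hNq
  calc ((univ.filter fun v : Fin M → ZMod 2 =>
        v ≠ 0 ∧ (wt v : ℝ) < c * M).card : ℝ)
      ≤ 1 / q := hN
    _ ≤ 1 / Real.exp (-(4 * Real.sqrt c * M)) := by
        apply one_div_le_one_div_of_le (Real.exp_pos _) hqexp
    _ = Real.exp (4 * Real.sqrt c * M) := by
        rw [one_div, ← Real.exp_neg, neg_neg]

open scoped Classical in
lemma tcard_bound (M H : ℕ) {v : Fin M → ZMod 2} (hv : v ≠ 0) :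
    (tcard M H v : ℝ) * ((2:ℝ)^M - 1)
      ≤ ((Bset M H).card : ℝ) * (2:ℝ) ^ (((M:ℝ) + H)/2) := by
  classical
  set Vnz := univ.filter (fun v' : Fin M → ZMod 2 => v' ≠ 0) with hVnz
  have hVnzcard : (Vnz.card : ℝ) = 2^M - 1 := by
    rw [hVnz, Finset.filter_ne', Finset.card_erase_of_mem (Finset.mem_univ _)]
    have hcard : (univ : Finset (Fin M → ZMod 2)).card = 2^M := by
      rw [Finset.card_univ, Fintype.card_fun]
      simp [ZMod.card]
    rw [hcard]
    have : 1 ≤ 2^M := Nat.one_le_two_pow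
    push_cast [this]
    ring
  have hswap : ∑ v' ∈ Vnz, tcard M H v'
      = ∑ δ ∈ Bset M H, (Vnz.filter fun w => δ.mulVec w = 0).card := by
    simp only [tcard, Finset.card_filter]
    exact Finset.sum_comm
  have hperδ : ∀ δ ∈ Bset M H,
      (((Vnz.filter fun w => δ.mulVec w = 0).card : ℕ) : ℝ)
        ≤ (2:ℝ) ^ (((M:ℝ) + H)/2) := by
    intro δ hδ
    obtain ⟨hδ2, hδr⟩ := (Finset.mem_filter.mp hδ).2
    have hr : 2 * δ.rank ≤ M := two_rank_le hδ2
    have hMr : M = 2 * δ.rank + H := by omega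
    have hnat : (Vnz.filter fun w => δ.mulVec w = 0).card ≤ 2 ^ (M - δ.rank) := by
      rw [← ker_card δ]
      apply Finset.card_le_card
      rw [hVnz]
      intro w hw
      simp only [Finset.mem_filter] at hw ⊢
      exact ⟨Finset.mem_univ _, hw.2⟩
    have hcast : ((2 ^ (M - δ.rank) : ℕ) : ℝ) = (2:ℝ) ^ (((M:ℝ) + H)/2) := by
      have hexp : ((M - δ.rank : ℕ) : ℝ) = ((M:ℝ) + H)/2 := by
        have : δ.rank ≤ M := by omega
        push_cast [Nat.cast_sub this]
        have : (M : ℝ) = 2 * δ.rank + H := by exact_mod_cast congrArg Nat.cast hMr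
        linarith
      rw [← hexp]
      push_cast
      rw [Real.rpow_natCast]
    calc (((Vnz.filter fun w => δ.mulVec w = 0).card : ℕ) : ℝ)
        ≤ ((2 ^ (M - δ.rank) : ℕ) : ℝ) := by exact_mod_cast hnat
      _ = (2:ℝ) ^ (((M:ℝ) + H)/2) := hcast
  calc (tcard M H v : ℝ) * ((2:ℝ)^M - 1)
      = ∑ v' ∈ Vnz, (tcard M H v' : ℝ) := by
        rw [Finset.sum_congr rfl (fun v' hv' => by
          rw [tcard_const (Finset.mem_filter.mp hv').2 hv])]
        rw [Finset.sum_const, nsmul_eq_mul, hVnzcard]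
        ring
    _ = ∑ δ ∈ Bset M H, (((Vnz.filter fun w => δ.mulVec w = 0).card : ℕ) : ℝ) := by
        rw [← Nat.cast_sum, ← Nat.cast_sum, hswap]
    _ ≤ ∑ δ ∈ Bset M H, (2:ℝ) ^ (((M:ℝ) + H)/2) := Finset.sum_le_sum hperδ
    _ = ((Bset M H).card : ℝ) * (2:ℝ) ^ (((M:ℝ) + H)/2) := by
        rw [Finset.sum_const, nsmul_eq_mul]

open scoped Classical in
lemma key_bound {ε : ℝ} (hε : 0 < ε) {c : ℝ} (hc0 : 0 < c) (hc1 : c ≤ 1/2)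
    (hcs : 4 * Real.sqrt c ≤ ε / 2 * Real.log 2) (M H : ℕ) (hM : 1 ≤ M)
    (hH : (H : ℝ) ≤ ε / 2 * M) :
    (((univ.filter fun δ : Matrix (Fin M) (Fin M) (ZMod 2) =>
        (δ * δ = 0 ∧ M - 2 * δ.rank = H) ∧
        ∃ v, v ≠ 0 ∧ δ.mulVec v = 0 ∧ (wt v : ℝ) < c * M).card : ℝ))
      ≤ 2 * (2:ℝ) ^ ((ε - 1/2) * (M:ℝ)) * ((Bset M H).card : ℝ) := by
  classical
  set Vlow := univ.filter (fun v : Fin M → ZMod 2 => v ≠ 0 ∧ (wt v : ℝ) < c * M) with hVlow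
  set K := (2:ℝ) ^ (((M:ℝ) + H)/2) with hK
  have hKpos : 0 < K := Real.rpow_pos_of_pos (by norm_num) _
  have hBpos : (0:ℝ) ≤ ((Bset M H).card : ℝ) := Nat.cast_nonneg _
  -- union bound (ℕ)
  have hunion : (univ.filter fun δ : Matrix (Fin M) (Fin M) (ZMod 2) =>
        (δ * δ = 0 ∧ M - 2 * δ.rank = H) ∧
        ∃ v, v ≠ 0 ∧ δ.mulVec v = 0 ∧ (wt v : ℝ) < c * M).card
      ≤ ∑ v ∈ Vlow, tcard M H v := by
    have hsub : (univ.filter fun δ : Matrix (Fin M) (Fin M) (ZMod 2) =>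
          (δ * δ = 0 ∧ M - 2 * δ.rank = H) ∧
          ∃ v, v ≠ 0 ∧ δ.mulVec v = 0 ∧ (wt v : ℝ) < c * M)
        ⊆ Vlow.biUnion (fun v => (Bset M H).filter fun δ => δ.mulVec v = 0) := by
      intro δ hδ
      obtain ⟨hbase, v, hv0, hker, hwt⟩ := by
        simpa only [Finset.mem_filter, Finset.mem_univ, true_and] using
          Finset.mem_filter.mp hδ
      refine Finset.mem_biUnion.mpr ⟨v, ?_, ?_⟩
      · exact Finset.mem_filter.mpr ⟨Finset.mem_univ _, hv0, hwt⟩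
      · refine Finset.mem_filter.mpr ⟨?_, hker⟩
        exact Finset.mem_filter.mpr ⟨Finset.mem_univ _, hbase⟩
    calc _ ≤ (Vlow.biUnion fun v => (Bset M H).filter fun δ => δ.mulVec v = 0).card :=
          Finset.card_le_card hsub
      _ ≤ ∑ v ∈ Vlow, tcard M H v := Finset.card_biUnion_le
  -- per-vector real bound
  have h2M : ((2:ℝ) ^ (M:ℕ)) = (2:ℝ) ^ ((M:ℝ)) := (Real.rpow_natCast 2 M).symm
  have h2Mge : (2:ℝ) ≤ (2:ℝ) ^ ((M:ℝ)) := by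
    calc (2:ℝ) = (2:ℝ) ^ ((1:ℝ)) := by norm_num
      _ ≤ (2:ℝ) ^ ((M:ℝ)) := by
        apply Real.rpow_le_rpow_of_exponent_le (by norm_num)
        exact_mod_cast hM
  have hden : (2:ℝ) ^ ((M:ℝ)) / 2 ≤ (2:ℝ) ^ (M:ℕ) - 1 := by
    rw [h2M]; linarith
  have hdenpos : (0:ℝ) < (2:ℝ) ^ (M:ℕ) - 1 := by
    rw [h2M]; linarith
  have htc : ∀ v ∈ Vlow, (tcard M H v : ℝ)
      ≤ ((Bset M H).card : ℝ) * K / ((2:ℝ) ^ (M:ℕ) - 1) := by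
    intro v hv
    have hv0 : v ≠ 0 := ((Finset.mem_filter.mp hv).2).1
    rw [le_div_iff₀ hdenpos]
    exact tcard_bound M H hv0
  set T := ((Bset M H).card : ℝ) * K / ((2:ℝ) ^ (M:ℕ) - 1) with hT
  have hTpos : 0 ≤ T := by positivity
  have hchain1 : ((univ.filter fun δ : Matrix (Fin M) (Fin M) (ZMod 2) =>
        (δ * δ = 0 ∧ M - 2 * δ.rank = H) ∧
        ∃ v, v ≠ 0 ∧ δ.mulVec v = 0 ∧ (wt v : ℝ) < c * M).card : ℝ)
      ≤ (Vlow.card : ℝ) * T := by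
    calc _ ≤ ((∑ v ∈ Vlow, tcard M H v : ℕ) : ℝ) := by exact_mod_cast hunion
      _ = ∑ v ∈ Vlow, (tcard M H v : ℝ) := by push_cast; ring
      _ ≤ ∑ v ∈ Vlow, T := Finset.sum_le_sum htc
      _ = (Vlow.card : ℝ) * T := by rw [Finset.sum_const, nsmul_eq_mul]
  -- N bound
  have hN : (Vlow.card : ℝ) ≤ (2:ℝ) ^ ((ε/2) * (M:ℝ)) := by
    calc (Vlow.card : ℝ) ≤ Real.exp (4 * Real.sqrt c * M) := Ncard_le hc0 hc1 M
      _ ≤ (2:ℝ) ^ ((ε/2) * (M:ℝ)) := by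
        rw [Real.rpow_def_of_pos (by norm_num : (0:ℝ) < 2)]
        apply Real.exp_le_exp.mpr
        have hM0 : (0:ℝ) ≤ (M:ℝ) := Nat.cast_nonneg M
        calc 4 * Real.sqrt c * M ≤ (ε/2 * Real.log 2) * M :=
              mul_le_mul_of_nonneg_right hcs hM0
          _ = Real.log 2 * (ε/2 * M) := by ring
  -- T bound
  have hTb : T ≤ ((Bset M H).card : ℝ) * (2 * (2:ℝ) ^ ((((H:ℝ) - M))/2)) := by
    rw [hT, div_le_iff₀ hdenpos]
    have hKe : (2:ℝ) ^ ((((H:ℝ) - M))/2) * ((2:ℝ) ^ ((M:ℝ))) = K := by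
      rw [hK, ← Real.rpow_add (by norm_num : (0:ℝ) < 2)]
      congr 1
      ring
    have h1 : K ≤ (2 * (2:ℝ) ^ ((((H:ℝ) - M))/2)) * ((2:ℝ) ^ (M:ℕ) - 1) := by
      have hp : (0:ℝ) < (2:ℝ) ^ ((((H:ℝ) - M))/2) := Real.rpow_pos_of_pos (by norm_num) _
      calc K = 2 * (2:ℝ) ^ ((((H:ℝ) - M))/2) * ((2:ℝ)^((M:ℝ)) / 2) := by
            rw [← hKe]; ring
        _ ≤ (2 * (2:ℝ) ^ ((((H:ℝ) - M))/2)) * ((2:ℝ) ^ (M:ℕ) - 1) := by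
            apply mul_le_mul_of_nonneg_left hden (by positivity)
    calc ((Bset M H).card : ℝ) * K
        ≤ ((Bset M H).card : ℝ) * ((2 * (2:ℝ) ^ ((((H:ℝ) - M))/2)) * ((2:ℝ) ^ (M:ℕ) - 1)) :=
          mul_le_mul_of_nonneg_left h1 hBpos
      _ = ((Bset M H).card : ℝ) * (2 * (2:ℝ) ^ ((((H:ℝ) - M))/2)) * ((2:ℝ) ^ (M:ℕ) - 1) := by
          ring
  -- combine
  have hfinal : (Vlow.card : ℝ) * T
      ≤ (2:ℝ) ^ ((ε/2) * (M:ℝ)) * (((Bset M H).card : ℝ) * (2 * (2:ℝ) ^ ((((H:ℝ) - M))/2))) := by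
    apply mul_le_mul hN hTb hTpos (by positivity)
  have hexp : (2:ℝ) ^ ((ε/2) * (M:ℝ)) * (2:ℝ) ^ ((((H:ℝ) - M))/2)
      ≤ (2:ℝ) ^ ((ε - 1/2) * (M:ℝ)) := by
    rw [← Real.rpow_add (by norm_num : (0:ℝ) < 2)]
    apply Real.rpow_le_rpow_of_exponent_le (by norm_num)
    have hM0 : (0:ℝ) ≤ (M:ℝ) := Nat.cast_nonneg M
    nlinarith [mul_nonneg (le_of_lt hε) hM0]
  calc ((univ.filter fun δ : Matrix (Fin M) (Fin M) (ZMod 2) =>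
        (δ * δ = 0 ∧ M - 2 * δ.rank = H) ∧
        ∃ v, v ≠ 0 ∧ δ.mulVec v = 0 ∧ (wt v : ℝ) < c * M).card : ℝ)
      ≤ (Vlow.card : ℝ) * T := hchain1
    _ ≤ (2:ℝ) ^ ((ε/2) * (M:ℝ)) * (((Bset M H).card : ℝ) * (2 * (2:ℝ) ^ ((((H:ℝ) - M))/2))) :=
        hfinal
    _ = 2 * ((2:ℝ) ^ ((ε/2) * (M:ℝ)) * (2:ℝ) ^ ((((H:ℝ) - M))/2)) * ((Bset M H).card : ℝ) := by
        ring
    _ ≤ 2 * (2:ℝ) ^ ((ε - 1/2) * (M:ℝ)) * ((Bset M H).card : ℝ) := by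
        apply mul_le_mul_of_nonneg_right (mul_le_mul_of_nonneg_left hexp (by norm_num)) hBpos

lemma natcard_eq_filter {α : Type*} [Fintype α] (P : α → Prop) [DecidablePred P] :
    Nat.card {x // P x} = (univ.filter P).card := by
  rw [Nat.card_eq_fintype_card, Fintype.card_subtype]

/-- For a uniformly random `M×M` boundary operator `δ` with homological dimension
`H ≤ ρM`, the probability that `ker δ` (or `ker δᵀ`) contains a nonzero vector of weight
less than `cM` is at most `O(1)·2^{(ε − 1/2)M}`, stated as a counting bound over the
ensemble `B = {δ : δ² = 0, M − 2 rank δ = H}`. -/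
theorem random_boundary_operator_low_weight_kernel_bound :
    ∀ ε : ℝ, 0 < ε → ∃ c : ℝ, 0 < c ∧ ∃ ρ : ℝ, 0 < ρ ∧ ∃ C : ℝ, 0 < C ∧ ∃ M₀ : ℕ,
      ∀ M : ℕ, M₀ ≤ M → ∀ H : ℕ, (H : ℝ) ≤ ρ * M →
        ((Nat.card {δ : Matrix (Fin M) (Fin M) (ZMod 2) //
            (δ * δ = 0 ∧ M - 2 * δ.rank = H) ∧
            ∃ v : Fin M → ZMod 2, v ≠ 0 ∧ δ.mulVec v = 0 ∧ (wt v : ℝ) < c * M} : ℝ) ≤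
          C * (2 : ℝ) ^ ((ε - 1/2) * (M : ℝ)) *
            (Nat.card {δ : Matrix (Fin M) (Fin M) (ZMod 2) //
              δ * δ = 0 ∧ M - 2 * δ.rank = H} : ℝ)) ∧
        ((Nat.card {δ : Matrix (Fin M) (Fin M) (ZMod 2) //
            (δ * δ = 0 ∧ M - 2 * δ.rank = H) ∧
            ∃ v : Fin M → ZMod 2, v ≠ 0 ∧ δᵀ.mulVec v = 0 ∧ (wt v : ℝ) < c * M} : ℝ) ≤
          C * (2 : ℝ) ^ ((ε - 1/2) * (M : ℝ)) *
            (Nat.card {δ : Matrix (Fin M) (Fin M) (ZMod 2) //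
              δ * δ = 0 ∧ M - 2 * δ.rank = H} : ℝ)) := by
  classical
  intro ε hε
  have hl2 : 0 < Real.log 2 := Real.log_pos (by norm_num)
  set a : ℝ := ε * Real.log 2 / 8 with ha
  have ha0 : 0 < a := by positivity
  refine ⟨min (1/2) (a^2), lt_min (by norm_num) (by positivity), ε/2, by positivity,
    2, by norm_num, 1, fun M hM H hH => ?_⟩
  set c : ℝ := min (1/2) (a^2) with hc
  have hc0 : 0 < c := lt_min (by norm_num) (by positivity)
  have hc1 : c ≤ 1/2 := min_le_left _ _
  have hcs : 4 * Real.sqrt c ≤ ε / 2 * Real.log 2 := by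
    have h1 : Real.sqrt c ≤ a := by
      calc Real.sqrt c ≤ Real.sqrt (a^2) := Real.sqrt_le_sqrt (min_le_right _ _)
        _ = a := Real.sqrt_sq ha0.le
    calc 4 * Real.sqrt c ≤ 4 * a := by linarith
      _ = ε / 2 * Real.log 2 := by rw [ha]; ring
  have hB : (Nat.card {δ : Matrix (Fin M) (Fin M) (ZMod 2) //
      δ * δ = 0 ∧ M - 2 * δ.rank = H} : ℕ) = (Bset M H).card := by
    rw [natcard_eq_filter, Bset]
  have hkb := key_bound hε hc0 hc1 hcs M H hM hH
  have hbadcard : (Nat.card {δ : Matrix (Fin M) (Fin M) (ZMod 2) //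
      (δ * δ = 0 ∧ M - 2 * δ.rank = H) ∧
      ∃ v : Fin M → ZMod 2, v ≠ 0 ∧ δ.mulVec v = 0 ∧ (wt v : ℝ) < c * M} : ℕ)
      = (univ.filter fun δ : Matrix (Fin M) (Fin M) (ZMod 2) =>
        (δ * δ = 0 ∧ M - 2 * δ.rank = H) ∧
        ∃ v, v ≠ 0 ∧ δ.mulVec v = 0 ∧ (wt v : ℝ) < c * M).card := by
    rw [natcard_eq_filter]
  have hmain : (Nat.card {δ : Matrix (Fin M) (Fin M) (ZMod 2) //
      (δ * δ = 0 ∧ M - 2 * δ.rank = H) ∧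
      ∃ v : Fin M → ZMod 2, v ≠ 0 ∧ δ.mulVec v = 0 ∧ (wt v : ℝ) < c * M} : ℝ)
      ≤ 2 * (2:ℝ) ^ ((ε - 1/2) * (M:ℝ)) *
        (Nat.card {δ : Matrix (Fin M) (Fin M) (ZMod 2) //
          δ * δ = 0 ∧ M - 2 * δ.rank = H} : ℝ) := by
    rw [hbadcard, hB]
    exact_mod_cast hkb
  refine ⟨hmain, ?_⟩
  have htr : Nat.card {δ : Matrix (Fin M) (Fin M) (ZMod 2) //
      (δ * δ = 0 ∧ M - 2 * δ.rank = H) ∧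
      ∃ v : Fin M → ZMod 2, v ≠ 0 ∧ δᵀ.mulVec v = 0 ∧ (wt v : ℝ) < c * M}
      = Nat.card {δ : Matrix (Fin M) (Fin M) (ZMod 2) //
      (δ * δ = 0 ∧ M - 2 * δ.rank = H) ∧
      ∃ v : Fin M → ZMod 2, v ≠ 0 ∧ δ.mulVec v = 0 ∧ (wt v : ℝ) < c * M} := by
    apply Nat.card_congr
    have sq : ∀ δ : Matrix (Fin M) (Fin M) (ZMod 2), δ * δ = 0 → δᵀ * δᵀ = 0 := by
      intro δ h
      rw [← Matrix.transpose_mul, h, Matrix.transpose_zero]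
    refine ⟨fun p => ⟨p.1ᵀ, ?_, ?_⟩, fun p => ⟨p.1ᵀ, ?_, ?_⟩, ?_, ?_⟩
    · exact ⟨sq _ p.2.1.1, by rw [Matrix.rank_transpose]; exact p.2.1.2⟩
    · exact p.2.2
    · exact ⟨sq _ p.2.1.1, by rw [Matrix.rank_transpose]; exact p.2.1.2⟩
    · obtain ⟨v, hv0, hker, hwt⟩ := p.2.2
      exact ⟨v, hv0, by rw [Matrix.transpose_transpose]; exact hker, hwt⟩
    · intro p; exact Subtype.ext (Matrix.transpose_transpose _)
    · intro p; exact Subtype.ext (Matrix.transpose_transpose _)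
  rw [htr]
  exact hmain
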